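/- Let f = {f_t}_{t≥1} be an anonymous acknowledgment-based protocol for n players, let π = π₁, π₂, … be a 0-1 sequence consistent with f, and for a finite positive integer τ* define the protocol g by g_t = π_t for 1 ≤ t ≤ τ* and g_t = f_t for t > τ*. If f is in equilibrium, then for every player i the unconditional expected latencies coincide: C_i^{f}(h₀) = C_i^{(f_{-i}, g)}(h₀). -/

import Mathlib

open scoped ENNReal

namespace Contention

/-- An acknowledgment-based protocol: maps a player's personal transmission history
(the list of her own past transmission indicators, oldest slot first) to the
probability of transmitting in the next slot. -/
abbrev Protocol : Type := List Bool → ℝ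

/-- A protocol is valid if it always prescribes a probability in `[0,1]`. -/
def ValidProtocol (f : Protocol) : Prop := ∀ h : List Bool, 0 ≤ f h ∧ f h ≤ 1

/-- A joint transmission history: the list of transmission vectors, oldest slot first. -/
abbrev Hist (n : ℕ) : Type := List (Fin n → Bool)

/-- The personal transmission history of player `i` extracted from a joint history. -/
def personal {n : ℕ} (h : Hist n) (i : Fin n) : List Bool := h.map fun v => v i

/-- Player `i` transmits alone (hence successfully) in the slot with transmission vector `v`. -/
def alone {n : ℕ} (v : Fin n → Bool) (i : Fin n) : Prop :=
  v i = true ∧ ∀ j : Fin n, j ≠ i → v j = false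

instance {n : ℕ} (v : Fin n → Bool) (i : Fin n) : Decidable (alone v i) := by
  unfold alone; infer_instance

/-- Player `i` is still pending after joint history `h` (she never transmitted alone). -/
def pending {n : ℕ} (h : Hist n) (i : Fin n) : Prop := ∀ v ∈ h, ¬ alone v i

instance {n : ℕ} (h : Hist n) (i : Fin n) : Decidable (pending h i) := by
  unfold pending; infer_instance

/-- Probability that the next slot has transmission vector `v`, given joint history `h`:
each pending player transmits independently with the probability her protocol assigns to
her personal history, and players that already succeeded stay quiet. -/
noncomputable def stepProb {n : ℕ} (F : Fin n → Protocol) (h : Hist n) (v : Fin n → Bool) : ℝ :=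
  ∏ i : Fin n,
    if pending h i then
      (if v i = true then F i (personal h i) else 1 - F i (personal h i))
    else
      (if v i = true then 0 else 1)

/-- Probability that, starting after joint history `h`, the next `e.length` slots produce
exactly the extension `e`. -/
noncomputable def contProb {n : ℕ} (F : Fin n → Protocol) (h e : Hist n) : ℝ :=
  ∏ t ∈ Finset.range e.length, stepProb F (h ++ e.take t) (e.getD t fun _ => false)

/-- Probability that the first `h.length` slots produce exactly the joint history `h`. -/
noncomputable def histProb {n : ℕ} (F : Fin n → Protocol) (h : Hist n) : ℝ := contProb F [] h

/-- Conditional probability, given joint history `h`, that player `i` is still pending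
after `s` further slots. -/
noncomputable def condPendProb {n : ℕ} (F : Fin n → Protocol) (h : Hist n) (i : Fin n)
    (s : ℕ) : ℝ :=
  ∑ e : Fin s → Fin n → Bool,
    if pending (h ++ List.ofFn e) i then contProb F h (List.ofFn e) else 0

/-- Conditional expected latency `E[Tᵢ | h]` of player `i` given joint history `h`
(`Tᵢ` is the first slot in which `i` transmits alone), computed via
`E[Tᵢ | h] = ∑_{s ≥ 0} Pr(Tᵢ > s | h)`; for `s ≤ h.length` the event `Tᵢ > s` is
determined by `h`, and for larger `s` its probability is `condPendProb`. -/
noncomputable def condLatency {n : ℕ} (F : Fin n → Protocol) (h : Hist n) (i : Fin n) : ℝ≥0∞ :=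
  ∑' s : ℕ,
    if s ≤ h.length then (if pending (h.take s) i then 1 else 0)
    else ENNReal.ofReal (condPendProb F h i (s - h.length))

/-- Conditional expected number of further slots until player `i` succeeds, given joint
history `h` (the slot of the successful transmission itself is counted). -/
noncomputable def condRemaining {n : ℕ} (F : Fin n → Protocol) (h : Hist n) (i : Fin n) : ℝ≥0∞ :=
  ∑' s : ℕ, ENNReal.ofReal (condPendProb F h i s)

/-- A profile of protocols is in equilibrium if after no joint history (arising with
positive probability) can a player strictly decrease her conditional expected latency
by unilaterally switching to another (valid) protocol. -/
def IsEquilibrium {n : ℕ} (F : Fin n → Protocol) : Prop :=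
  ∀ i : Fin n, ∀ h : Hist n, 0 < histProb F h →
    ∀ g : Protocol, ValidProtocol g →
      condLatency F h i ≤ condLatency (Function.update F i g) h i

end Contention

namespace Contention

/-- A personal history `h` is consistent with protocol `f` if a player following `f`
produces it with positive probability. -/
def SelfConsistent (f : Protocol) (h : List Bool) : Prop :=
  0 < ∏ t ∈ Finset.range h.length,
        (if h.getD t false = true then f (h.take t) else 1 - f (h.take t))

/-- The protocol `g = g(τ)` of Lemma 1: follow the deterministic 0-1 sequence `π`
(`π s` is the action of slot `s+1`) for the first `τ` slots, and follow `f` afterwards. -/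
noncomputable def switchProtocol (f : Protocol) (π : ℕ → Bool) (τ : ℕ) : Protocol := fun h =>
  if h.length < τ then (if π h.length then 1 else 0) else f h

-- ########## auxiliary development ##########

private theorem tsum_split (f : ℕ → ℝ≥0∞) (k : ℕ) :
    ∑' n, f n = ∑ i ∈ Finset.range k, f i + ∑' n, f (n + k) := by
  induction k with
  | zero => simp
  | succ k ih =>
    rw [ih, tsum_eq_zero_add' (f := fun n => f (n + k)) ENNReal.summable,
      Finset.sum_range_succ]
    simp [add_assoc, Nat.add_comm, Nat.add_assoc, Nat.add_left_comm]

variable {n : ℕ}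

theorem length_personal (h : Hist n) (i : Fin n) : (personal h i).length = h.length := by
  simp [personal]

theorem pending_append_left {h e : Hist n} {i : Fin n} (hp : pending (h ++ e) i) :
    pending h i := fun v hv => hp v (List.mem_append_left _ hv)

theorem stepProb_nonneg {F : Fin n → Protocol} (hF : ∀ j, ValidProtocol (F j))
    (h : Hist n) (v : Fin n → Bool) : 0 ≤ stepProb F h v := by
  apply Finset.prod_nonneg; intro j _
  have h1 := (hF j (personal h j)).1
  have h2 := (hF j (personal h j)).2
  by_cases hp : pending h j <;> by_cases hv : v j = true <;> simp [hp, hv] <;> linarith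

theorem contProb_nonneg {F : Fin n → Protocol} (hF : ∀ j, ValidProtocol (F j))
    (h e : Hist n) : 0 ≤ contProb F h e :=
  Finset.prod_nonneg fun _ _ => stepProb_nonneg hF _ _

theorem condPendProb_nonneg {F : Fin n → Protocol} (hF : ∀ j, ValidProtocol (F j))
    (h : Hist n) (i : Fin n) (s : ℕ) : 0 ≤ condPendProb F h i s := by
  apply Finset.sum_nonneg; intro e _
  split
  · exact contProb_nonneg hF _ _
  · exact le_refl _


theorem stepProb_congr {F F' : Fin n → Protocol} {h : Hist n}
    (hFF : ∀ j, pending h j → F j (personal h j) = F' j (personal h j)) (v : Fin n → Bool) :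
    stepProb F h v = stepProb F' h v := by
  apply Finset.prod_congr rfl; intro j _
  by_cases hp : pending h j
  · simp only [hp, if_pos, hFF j hp]
  · simp [hp]

theorem contProb_congr {F F' : Fin n → Protocol} {h : Hist n}
    (hFF : ∀ (e' : Hist n) (v : Fin n → Bool),
      stepProb F (h ++ e') v = stepProb F' (h ++ e') v) (e : Hist n) :
    contProb F h e = contProb F' h e :=
  Finset.prod_congr rfl fun t _ => hFF _ _

theorem condPendProb_congr {F F' : Fin n → Protocol} {h : Hist n}
    (hFF : ∀ (e' : Hist n) (v : Fin n → Bool),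
      stepProb F (h ++ e') v = stepProb F' (h ++ e') v) (i : Fin n) (s : ℕ) :
    condPendProb F h i s = condPendProb F' h i s := by
  apply Finset.sum_congr rfl; intro e _
  rw [contProb_congr hFF]

theorem condRemaining_congr {F F' : Fin n → Protocol} {h : Hist n}
    (hFF : ∀ (e' : Hist n) (v : Fin n → Bool),
      stepProb F (h ++ e') v = stepProb F' (h ++ e') v) (i : Fin n) :
    condRemaining F h i = condRemaining F' h i := by
  unfold condRemaining
  exact tsum_congr fun s => by rw [condPendProb_congr hFF]

theorem contProb_cons (F : Fin n → Protocol) (h : Hist n) (v : Fin n → Bool) (e : Hist n) :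
    contProb F h (v :: e) = stepProb F h v * contProb F (h ++ [v]) e := by
  unfold contProb
  rw [List.length_cons, Finset.prod_range_succ']
  have h1 : ∀ t : ℕ, stepProb F (h ++ (v :: e).take (t + 1)) ((v :: e).getD (t + 1) fun _ => false)
      = stepProb F ((h ++ [v]) ++ e.take t) (e.getD t fun _ => false) := by
    intro t
    simp [List.take_succ_cons, List.getD_cons_succ]
  have h0 : stepProb F (h ++ (v :: e).take 0) ((v :: e).getD 0 fun _ => false)
      = stepProb F h v := by simp
  simp only [h1, h0]
  exact mul_comm _ _

theorem contProb_concat (F : Fin n → Protocol) (h e : Hist n) (v : Fin n → Bool) :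
    contProb F h (e ++ [v]) = contProb F h e * stepProb F (h ++ e) v := by
  unfold contProb
  rw [List.length_append, List.length_singleton, Finset.prod_range_succ]
  have ha : ∀ t ∈ Finset.range e.length,
      stepProb F (h ++ (e ++ [v]).take t) ((e ++ [v]).getD t fun _ => false)
      = stepProb F (h ++ e.take t) (e.getD t fun _ => false) := by
    intro t ht
    rw [Finset.mem_range] at ht
    rw [List.take_append_of_le_length (le_of_lt ht), List.getD_append _ _ _ _ ht]
  have hb : stepProb F (h ++ (e ++ [v]).take e.length) ((e ++ [v]).getD e.length fun _ => false)
      = stepProb F (h ++ e) v := by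
    rw [List.take_append_of_le_length (le_refl _), List.take_length]
    have : (e ++ [v]).getD e.length (fun _ => false) = v := by
      unfold List.getD
      rw [List.getElem?_append_right (le_refl _), Nat.sub_self]
      rfl
    rw [this]
  rw [hb]
  exact congrArg₂ (· * ·) (Finset.prod_congr rfl ha) rfl

theorem histProb_concat (F : Fin n → Protocol) (h : Hist n) (v : Fin n → Bool) :
    histProb F (h ++ [v]) = histProb F h * stepProb F h v := by
  have := contProb_concat F [] h v
  simpa [histProb] using this

theorem condPendProb_zero (F : Fin n → Protocol) (h : Hist n) (i : Fin n) :
    condPendProb F h i 0 = if pending h i then 1 else 0 := by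
  unfold condPendProb
  rw [Fintype.sum_unique]
  simp [contProb]

theorem condPendProb_succ (F : Fin n → Protocol) (h : Hist n) (i : Fin n) (s : ℕ) :
    condPendProb F h i (s + 1)
      = ∑ v : Fin n → Bool, stepProb F h v * condPendProb F (h ++ [v]) i s := by
  unfold condPendProb
  rw [← Equiv.sum_comp (Fin.consEquiv (fun _ : Fin (s+1) => (Fin n → Bool)))]
  rw [Fintype.sum_prod_type]
  apply Finset.sum_congr rfl; intro v _
  rw [Finset.mul_sum]
  apply Finset.sum_congr rfl; intro e _
  have hofn : List.ofFn ((Fin.consEquiv (fun _ : Fin (s+1) => (Fin n → Bool))) (v, e))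
      = v :: List.ofFn e := by
    simp [Fin.consEquiv, List.ofFn_succ]
  rw [hofn, contProb_cons]
  have happ : h ++ v :: List.ofFn e = (h ++ [v]) ++ List.ofFn e := by simp
  rw [happ, mul_ite, mul_zero]


noncomputable def pendTail (F : Fin n → Protocol) (h : Hist n) (i : Fin n) : ℝ≥0∞ :=
  ∑' s : ℕ, ENNReal.ofReal (condPendProb F h i (s + 1))

theorem ofReal_condPendProb_zero (F : Fin n → Protocol) (h : Hist n) (i : Fin n) :
    ENNReal.ofReal (condPendProb F h i 0) = if pending h i then 1 else 0 := by
  rw [condPendProb_zero]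
  split <;> simp

theorem condRemaining_eq (F : Fin n → Protocol) (h : Hist n) (i : Fin n) :
    condRemaining F h i = (if pending h i then 1 else 0) + pendTail F h i := by
  unfold condRemaining pendTail
  rw [tsum_eq_zero_add' ENNReal.summable, ofReal_condPendProb_zero]

theorem pendTail_congr {F F' : Fin n → Protocol} {h : Hist n}
    (hFF : ∀ (e' : Hist n) (v : Fin n → Bool),
      stepProb F (h ++ e') v = stepProb F' (h ++ e') v) (i : Fin n) :
    pendTail F h i = pendTail F' h i :=
  tsum_congr fun s => by rw [condPendProb_congr hFF]

theorem pendTail_eq {F : Fin n → Protocol} (hF : ∀ j, ValidProtocol (F j))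
    (h : Hist n) (i : Fin n) :
    pendTail F h i
      = ∑ v : Fin n → Bool, ENNReal.ofReal (stepProb F h v) * condRemaining F (h ++ [v]) i := by
  unfold pendTail
  have h1 : ∀ s : ℕ, ENNReal.ofReal (condPendProb F h i (s + 1))
      = ∑ v : Fin n → Bool, ENNReal.ofReal (stepProb F h v)
          * ENNReal.ofReal (condPendProb F (h ++ [v]) i s) := by
    intro s
    rw [condPendProb_succ, ENNReal.ofReal_sum_of_nonneg]
    · exact Finset.sum_congr rfl fun v _ =>
        ENNReal.ofReal_mul (stepProb_nonneg hF _ _)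
    · intro v _
      exact mul_nonneg (stepProb_nonneg hF _ _) (condPendProb_nonneg hF _ _ _)
  simp only [h1]
  rw [Summable.tsum_finsetSum fun v _ => ENNReal.summable]
  apply Finset.sum_congr rfl; intro v _
  rw [ENNReal.tsum_mul_left]
  rfl

theorem condLatency_eq (F : Fin n → Protocol) (h : Hist n) (i : Fin n) :
    condLatency F h i
      = (∑ s ∈ Finset.range (h.length + 1), if pending (h.take s) i then 1 else 0)
        + pendTail F h i := by
  unfold condLatency
  rw [tsum_split _ (h.length + 1)]
  have h1 : ∀ s ∈ Finset.range (h.length + 1),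
      (if s ≤ h.length then (if pending (h.take s) i then (1:ℝ≥0∞) else 0)
        else ENNReal.ofReal (condPendProb F h i (s - h.length)))
      = if pending (h.take s) i then 1 else 0 := by
    intro s hs
    rw [Finset.mem_range] at hs
    rw [if_pos (by omega)]
  rw [Finset.sum_congr rfl h1]
  congr 1
  unfold pendTail
  apply tsum_congr; intro s
  rw [if_neg (by omega)]
  have : s + (h.length + 1) - h.length = s + 1 := by omega
  rw [this]

theorem prod_pos_factor {β : Type*} {s : Finset β} {φ : β → ℝ}
    (h0 : ∀ j ∈ s, 0 ≤ φ j) (hp : 0 < ∏ j ∈ s, φ j) : ∀ j ∈ s, 0 < φ j := by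
  intro j hj
  rcases (h0 j hj).lt_or_eq with hlt | heq
  · exact hlt
  · exact absurd (Finset.prod_eq_zero hj heq.symm) (ne_of_gt hp)

theorem histProb_eq (F : Fin n → Protocol) (h : Hist n) :
    histProb F h = ∏ t ∈ Finset.range h.length,
      stepProb F (h.take t) (h.getD t fun _ => false) := by
  unfold histProb contProb
  apply Finset.prod_congr rfl; intro t _
  rw [List.nil_append]

theorem pending_take {h : Hist n} {i : Fin n} (hp : pending h i) (t : ℕ) :
    pending (h.take t) i := fun v hv => hp v (List.mem_of_mem_take hv)

theorem histProb_pos_step {F : Fin n → Protocol} (hF : ∀ j, ValidProtocol (F j))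
    {h : Hist n} (hp : 0 < histProb F h) :
    ∀ t < h.length, 0 < stepProb F (h.take t) (h.getD t fun _ => false) := by
  intro t ht
  rw [histProb_eq] at hp
  exact prod_pos_factor (fun j _ => stepProb_nonneg hF _ _) hp t (Finset.mem_range.2 ht)

theorem histProb_take_pos {F : Fin n → Protocol} (hF : ∀ j, ValidProtocol (F j))
    {h : Hist n} (hp : 0 < histProb F h) (t : ℕ) (ht : t ≤ h.length) :
    0 < histProb F (h.take t) := by
  rw [histProb_eq]
  apply Finset.prod_pos
  intro s hs
  rw [Finset.mem_range, List.length_take] at hs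
  have hst : s < t := lt_of_lt_of_le hs (min_le_left _ _)
  have h1 : (h.take t).take s = h.take s := by
    rw [List.take_take, min_eq_left (le_of_lt hst)]
  have h2 : (h.take t).getD s (fun _ => false) = h.getD s (fun _ => false) := by
    unfold List.getD
    rw [List.getElem?_take_of_lt hst]
  rw [h1, h2]
  exact histProb_pos_step hF hp s (by omega)


theorem ofFn_pi_take (π : ℕ → Bool) {t m : ℕ} (h : t ≤ m) :
    (List.ofFn (fun s : Fin m => π s.val)).take t = List.ofFn (fun s : Fin t => π s.val) := by
  apply List.ext_getElem
  · simp [min_eq_left h]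
  · intro k h1 h2
    simp [List.getElem_take]

theorem ofFn_pi_getD (π : ℕ → Bool) {t m : ℕ} (h : t < m) :
    (List.ofFn (fun s : Fin m => π s.val)).getD t false = π t := by
  rw [List.getD_eq_getElem _ _ (by simpa using h)]
  simp

theorem head_ne_top (h : Hist n) (i : Fin n) :
    (∑ s ∈ Finset.range (h.length + 1), if pending (h.take s) i then (1:ℝ≥0∞) else 0) ≠ ∞ := by
  refine (ENNReal.sum_lt_top.2 ?_).ne
  intro s _
  split <;> simp

/-- Let `f` be an anonymous acknowledgment-based protocol for `n` players,
`π` a 0-1 sequence consistent with `f`, and for a finite positive integer `τ` let `g`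
play `π` up to slot `τ` and `f` afterwards.  If `f` is in equilibrium then for every
player `i` the unconditional expected latencies under `f` and under the unilateral
deviation to `g` coincide. -/
theorem consistent_deviations_are_best_responses :
    ∀ (n : ℕ) (f : Protocol) (π : ℕ → Bool) (τ : ℕ),
      1 ≤ τ →
      ValidProtocol f →
      (∀ t : ℕ, SelfConsistent f (List.ofFn fun s : Fin t => π s.val)) →
      IsEquilibrium (fun _ : Fin n => f) →
      ∀ i : Fin n,
        condLatency (fun _ : Fin n => f) [] i
          = condLatency (Function.update (fun _ : Fin n => f) i (switchProtocol f π τ)) [] i := by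
  intro n f π τ hτ hf hcons heq i
  set F : Fin n → Protocol := fun _ => f with hFdef
  set g : Protocol := switchProtocol f π τ with hgdef
  set G : Fin n → Protocol := Function.update F i g with hGdef
  have heqF : IsEquilibrium F := heq
  have hFv : ∀ j, ValidProtocol (F j) := fun _ => hf
  have hgv : ValidProtocol g := by
    intro p
    rw [hgdef]
    unfold switchProtocol
    by_cases hp : p.length < τ
    · by_cases hπ : π p.length <;> simp [hp, hπ]
    · simpa [hp] using hf p
  have hGv : ∀ j, ValidProtocol (G j) := by
    intro j
    rw [hGdef]
    by_cases hji : j = i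
    · subst hji; rw [Function.update_self]; exact hgv
    · rw [Function.update_of_ne hji]; exact hf
  have hGi : ∀ p : List Bool, G i p = g p := by
    intro p; rw [hGdef, Function.update_self]
  have hGj : ∀ j, j ≠ i → ∀ p : List Bool, G j p = f p := by
    intro j hji p; rw [hGdef, Function.update_of_ne hji]
  -- personal history of i along G-positive histories follows π
  clear hτ
  have hper : ∀ (m : ℕ) (h : Hist n), h.length = m → 0 < histProb G h → h.length ≤ τ →
      pending h i → personal h i = List.ofFn (fun s : Fin m => π s.val) := by
    intro m h
    induction h using List.reverseRecOn generalizing m with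
    | nil => intro hm _ _ _; subst hm; simp [personal]
    | append_singleton h v ih =>
      intro hm hpos hlen hpend
      rw [histProb_concat] at hpos
      have hh0 : 0 ≤ histProb G h := contProb_nonneg hGv _ _
      have hs0 : 0 ≤ stepProb G h v := stepProb_nonneg hGv _ _
      have hpos1 : 0 < histProb G h := by
        rcases hh0.lt_or_eq with h' | h'
        · exact h'
        · rw [← h', zero_mul] at hpos; exact absurd hpos (lt_irrefl 0)
      have hpos2 : 0 < stepProb G h v := by
        rcases hs0.lt_or_eq with h' | h'
        · exact h'
        · rw [← h', mul_zero] at hpos; exact absurd hpos (lt_irrefl 0)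
      have hlen1 : h.length + 1 ≤ τ := by simpa using hlen
      have hpend1 : pending h i := pending_append_left hpend
      have ihe := ih h.length rfl hpos1 (by omega) hpend1
      have hfac : (if pending h i then
          (if v i = true then G i (personal h i) else 1 - G i (personal h i))
          else (if v i = true then (0:ℝ) else 1)) ≠ 0 := by
        intro h0
        have : stepProb G h v = 0 := Finset.prod_eq_zero (Finset.mem_univ i) h0
        rw [this] at hpos2; exact absurd hpos2 (lt_irrefl 0)
      have hGiv : G i (personal h i) = (if π h.length then (1:ℝ) else 0) := by
        rw [hGi, hgdef]
        unfold switchProtocol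
        rw [length_personal, if_pos (by omega)]
      rw [if_pos hpend1, hGiv] at hfac
      have hvi : v i = π h.length := by
        by_cases hv : v i = true <;> by_cases hπ : π h.length <;>
          simp [hv, hπ] at hfac ⊢
      have hmm : m = h.length + 1 := by
        rw [← hm]; simp
      subst hmm
      have hpp : personal (h ++ [v]) i = personal h i ++ [v i] := by simp [personal]
      rw [hpp, ihe, hvi, List.ofFn_succ']
      simp [Fin.last]
  -- after slot τ the two profiles agree
  have hbase : ∀ h : Hist n, τ ≤ h.length →
      ∀ (e' : Hist n) (v : Fin n → Bool), stepProb G (h ++ e') v = stepProb F (h ++ e') v := by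
    intro h hlen e' v
    apply stepProb_congr
    intro j _
    by_cases hji : j = i
    · subst hji
      rw [hGi, hgdef]
      unfold switchProtocol
      rw [length_personal, if_neg (by simp; omega)]
    · rw [hGj j hji]
  -- once i has succeeded the two profiles give identical dynamics
  have hnp : ∀ h : Hist n, ¬ pending h i →
      ∀ (e' : Hist n) (v : Fin n → Bool), stepProb G (h ++ e') v = stepProb F (h ++ e') v := by
    intro h hp e' v
    apply stepProb_congr
    intro j hpj
    by_cases hji : j = i
    · subst hji; exact absurd (pending_append_left hpj) hp
    · rw [hGj j hji]
  -- G-positive histories are F-positive (up to time τ)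
  have hFpos : ∀ h : Hist n, h.length ≤ τ → 0 < histProb G h → 0 < histProb F h := by
    intro h hlen hpos
    rw [histProb_eq]
    apply Finset.prod_pos
    intro t ht
    rw [Finset.mem_range] at ht
    have hGstep := histProb_pos_step hGv hpos t ht
    have hplen : (h.take t).length = t := by rw [List.length_take]; omega
    have hfacpos : ∀ j : Fin n, 0 <
        (if pending (h.take t) j then
          (if h.getD t (fun _ => false) j = true then G j (personal (h.take t) j)
            else 1 - G j (personal (h.take t) j))
          else (if h.getD t (fun _ => false) j = true then (0:ℝ) else 1)) := by
      intro j
      refine prod_pos_factor (fun j' _ => ?_) hGstep j (Finset.mem_univ j)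
      have h1 := (hGv j' (personal (h.take t) j')).1
      have h2 := (hGv j' (personal (h.take t) j')).2
      by_cases hpj : pending (h.take t) j' <;>
        by_cases hvj : h.getD t (fun _ => false) j' = true <;> simp [hpj, hvj] <;> linarith
    apply Finset.prod_pos
    intro j _
    by_cases hji : j = i
    · rw [hji]
      by_cases hpj : pending (h.take t) i
      · rw [if_pos hpj]
        have hGp : 0 < histProb G (h.take t) := histProb_take_pos hGv hpos t (by omega)
        have hpe := hper t (h.take t) hplen hGp (by omega) hpj
        have hfi := hfacpos i
        rw [if_pos hpj] at hfi
        have hGiv : G i (personal (h.take t) i) = (if π t then (1:ℝ) else 0) := by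
          rw [hGi, hgdef]
          unfold switchProtocol
          rw [length_personal, hplen, if_pos (by omega)]
        rw [hGiv] at hfi
        have hvi : h.getD t (fun _ => false) i = π t := by
          by_cases hv : h.getD t (fun _ => false) i = true <;> by_cases hπ : π t <;>
            simp [hv, hπ] at hfi ⊢
        have hcns := hcons (t + 1)
        unfold SelfConsistent at hcns
        rw [List.length_ofFn] at hcns
        have hnn : ∀ s ∈ Finset.range (t + 1), (0:ℝ) ≤
            (if (List.ofFn fun s : Fin (t+1) => π s.val).getD s false = true
              then f ((List.ofFn fun s : Fin (t+1) => π s.val).take s)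
              else 1 - f ((List.ofFn fun s : Fin (t+1) => π s.val).take s)) := by
          intro s _
          have := hf ((List.ofFn fun s : Fin (t+1) => π s.val).take s)
          split <;> linarith [this.1, this.2]
        have hcf := prod_pos_factor hnn hcns t (Finset.mem_range.2 (Nat.lt_succ_self _))
        rw [ofFn_pi_getD π (Nat.lt_succ_self _), ofFn_pi_take π (Nat.le_succ _)] at hcf
        rw [hpe, hvi]
        show 0 < (if π t = true then f (List.ofFn fun s : Fin t => π s.val)
          else 1 - f (List.ofFn fun s : Fin t => π s.val))
        exact hcf
      · rw [if_neg hpj]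
        have hfi := hfacpos i
        rw [if_neg hpj] at hfi
        exact hfi
    · have hfj := hfacpos j
      have hFG : F j (personal (h.take t) j) = G j (personal (h.take t) j) := (hGj j hji _).symm
      by_cases hpj : pending (h.take t) j
      · rw [if_pos hpj, hFG]
        rw [if_pos hpj] at hfj
        exact hfj
      · rw [if_neg hpj]
        rw [if_neg hpj] at hfj
        exact hfj
  -- the key backward induction
  have key : ∀ (d : ℕ) (h : Hist n), τ ≤ h.length + d → 0 < histProb G h →
      condRemaining G h i = condRemaining F h i := by
    intro d
    induction d with
    | zero =>
      intro h hlen _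
      exact condRemaining_congr (hbase h (by omega)) i
    | succ d IH =>
      intro h hlen hpos
      by_cases hge : τ ≤ h.length
      · exact condRemaining_congr (hbase h hge) i
      by_cases hpend : pending h i
      swap
      · exact condRemaining_congr (hnp h hpend) i
      have hlt : h.length < τ := by omega
      have hpe := hper h.length h rfl hpos (by omega) hpend
      set c : ℝ := f (personal h i) with hcdef
      set gd : Bool → Protocol :=
        fun b p => if p.length = h.length then (if b then (1:ℝ) else 0) else f p with hgddef
      have hgdv : ∀ b, ValidProtocol (gd b) := by
        intro b p
        rw [hgddef]
        by_cases h1 : p.length = h.length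
        · by_cases hb : b <;> simp [h1, hb]
        · simpa [h1] using hf p
      have hFbv : ∀ b j, ValidProtocol (Function.update F i (gd b) j) := by
        intro b j
        by_cases hji : j = i
        · rw [hji, Function.update_self]; exact hgdv b
        · rw [Function.update_of_ne hji]; exact hf
      have hFbj : ∀ (b : Bool) (j : Fin n), j ≠ i → ∀ p : List Bool,
          Function.update F i (gd b) j p = f p := by
        intro b j hji p; rw [Function.update_of_ne hji]
      have hFbi : ∀ (b : Bool) (p : List Bool), Function.update F i (gd b) i p = gd b p := by
        intro b p; rw [Function.update_self]
      have hRFb : ∀ (b : Bool) (v : Fin n → Bool),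
          condRemaining (Function.update F i (gd b)) (h ++ [v]) i
            = condRemaining F (h ++ [v]) i := by
        intro b v
        refine condRemaining_congr (fun e' w => stepProb_congr (fun j _ => ?_) w) i
        by_cases hji : j = i
        · rw [hji, hFbi, hgddef]
          have hne : (personal ((h ++ [v]) ++ e') i).length ≠ h.length := by
            rw [length_personal]; simp
          simp only [if_neg hne]
          rfl
        · rw [Function.update_of_ne hji]
      have hTb : ∀ b : Bool, pendTail (Function.update F i (gd b)) h i
          = ∑ v : Fin n → Bool,
              ENNReal.ofReal (stepProb (Function.update F i (gd b)) h v)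
                * condRemaining F (h ++ [v]) i := by
        intro b
        rw [pendTail_eq (hFbv b)]
        exact Finset.sum_congr rfl fun v _ => by rw [hRFb b v]
      have hFhpos : 0 < histProb F h := hFpos h (by omega) hpos
      have hle : ∀ b : Bool, pendTail F h i
          ≤ ∑ v : Fin n → Bool,
              ENNReal.ofReal (stepProb (Function.update F i (gd b)) h v)
                * condRemaining F (h ++ [v]) i := by
        intro b
        have h1 := heqF i h hFhpos (gd b) (hgdv b)
        rw [condLatency_eq, condLatency_eq] at h1
        rw [← hTb b]
        exact (ENNReal.add_le_add_iff_left (head_ne_top h i)).1 h1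
      have hW : ∀ v : Fin n → Bool, stepProb F h v = (if v i = true then c else 1 - c)
          * ∏ j ∈ Finset.univ.erase i,
            (if pending h j then
              (if v j = true then F j (personal h j) else 1 - F j (personal h j))
              else (if v j = true then (0:ℝ) else 1)) := by
        intro v
        rw [show stepProb F h v = _ from
          (Finset.mul_prod_erase Finset.univ _ (Finset.mem_univ i)).symm]
        rw [if_pos hpend]
      have hWb : ∀ (b : Bool) (v : Fin n → Bool),
          stepProb (Function.update F i (gd b)) h v = (if v i = b then (1:ℝ) else 0)
          * ∏ j ∈ Finset.univ.erase i,
            (if pending h j then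
              (if v j = true then F j (personal h j) else 1 - F j (personal h j))
              else (if v j = true then (0:ℝ) else 1)) := by
        intro b v
        rw [show stepProb (Function.update F i (gd b)) h v = _ from
          (Finset.mul_prod_erase Finset.univ _ (Finset.mem_univ i)).symm]
        rw [if_pos hpend]
        refine congrArg₂ (· * ·) ?_ ?_
        · rw [hFbi, hgddef]
          simp only [length_personal, if_pos rfl]
          by_cases hb : b <;> by_cases hv : v i = true <;> simp [hb, hv]
        · refine Finset.prod_congr rfl fun j hj => ?_
          have hji : j ≠ i := Finset.ne_of_mem_erase hj
          by_cases hpj : pending h j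
          · simp only [if_pos hpj]
            rw [Function.update_of_ne hji]
          · simp only [if_neg hpj]
      have hc0 : (0:ℝ) ≤ c := (hf (personal h i)).1
      have hc1 : c ≤ 1 := (hf (personal h i)).2
      have hpoint : ∀ v : Fin n → Bool, ENNReal.ofReal (stepProb F h v)
          = ENNReal.ofReal c
              * ENNReal.ofReal (stepProb (Function.update F i (gd true)) h v)
            + ENNReal.ofReal (1 - c)
              * ENNReal.ofReal (stepProb (Function.update F i (gd false)) h v) := by
        intro v
        rw [hW v, hWb true v, hWb false v]
        by_cases hv : v i = true
        · rw [if_pos hv, if_pos hv, if_neg (by rw [hv]; exact (by decide : ¬ (true = false)))]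
          rw [one_mul, zero_mul, ENNReal.ofReal_zero, mul_zero, add_zero]
          exact ENNReal.ofReal_mul hc0
        · have hv' : v i = false := by revert hv; cases v i <;> simp
          rw [if_neg hv, if_neg hv, if_pos hv']
          rw [one_mul, zero_mul, ENNReal.ofReal_zero, mul_zero, zero_add]
          exact ENNReal.ofReal_mul (by linarith : (0:ℝ) ≤ 1 - c)
      have hmix : pendTail F h i
          = ENNReal.ofReal c * (∑ v : Fin n → Bool,
              ENNReal.ofReal (stepProb (Function.update F i (gd true)) h v)
                * condRemaining F (h ++ [v]) i)
            + ENNReal.ofReal (1 - c) * (∑ v : Fin n → Bool,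
              ENNReal.ofReal (stepProb (Function.update F i (gd false)) h v)
                * condRemaining F (h ++ [v]) i) := by
        rw [pendTail_eq hFv]
        rw [Finset.sum_congr rfl
          (fun v _ => by rw [hpoint v, add_mul, mul_assoc, mul_assoc])]
        rw [Finset.sum_add_distrib, ← Finset.mul_sum, ← Finset.mul_sum]
      have hGstep : ∀ v : Fin n → Bool,
          stepProb G h v = stepProb (Function.update F i (gd (π h.length))) h v := by
        intro v
        apply stepProb_congr
        intro j _
        by_cases hji : j = i
        · rw [hji, hGi, hFbi, hgdef, hgddef]
          unfold switchProtocol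
          simp only [length_personal]
          rw [if_pos hlt]
          simp
        · rw [hGj j hji, hFbj (π h.length) j hji]
      have hTG : pendTail G h i = ∑ v : Fin n → Bool,
          ENNReal.ofReal (stepProb (Function.update F i (gd (π h.length))) h v)
            * condRemaining F (h ++ [v]) i := by
        rw [pendTail_eq hGv]
        apply Finset.sum_congr rfl
        intro v _
        rcases (stepProb_nonneg hGv h v).lt_or_eq with hsp | hsp
        · have hpos' : 0 < histProb G (h ++ [v]) := by
            rw [histProb_concat]; exact mul_pos hpos hsp
          rw [hGstep v, IH (h ++ [v]) (by simp; omega) hpos']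
        · rw [hGstep v] at hsp ⊢
          rw [← hsp]
          simp
      have hca : 0 < (if π h.length = true then c else 1 - c) := by
        have hcns := hcons (h.length + 1)
        unfold SelfConsistent at hcns
        rw [List.length_ofFn] at hcns
        have hnn : ∀ s ∈ Finset.range (h.length + 1), (0:ℝ) ≤
            (if (List.ofFn fun s : Fin (h.length+1) => π s.val).getD s false = true
              then f ((List.ofFn fun s : Fin (h.length+1) => π s.val).take s)
              else 1 - f ((List.ofFn fun s : Fin (h.length+1) => π s.val).take s)) := by
          intro s _
          have := hf ((List.ofFn fun s : Fin (h.length+1) => π s.val).take s)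
          split <;> linarith [this.1, this.2]
        have hcf := prod_pos_factor hnn hcns h.length (Finset.mem_range.2 (Nat.lt_succ_self _))
        rw [ofFn_pi_getD π (Nat.lt_succ_self _), ofFn_pi_take π (Nat.le_succ _), ← hpe] at hcf
        exact hcf
      have contra : ∀ (x y T : ℝ≥0∞) (p q : ℝ), 0 ≤ p → 0 ≤ q → p + q = 1 → 0 < p →
          T ≠ ⊤ → T = ENNReal.ofReal p * x + ENNReal.ofReal q * y → T ≤ y → T < x → False := by
        intro x y T p q hp hq hpq hppos hT hmixT hTy hTx
        have h1 : ENNReal.ofReal p * T < ENNReal.ofReal p * x :=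
          ENNReal.mul_lt_mul_right (by simp [ENNReal.ofReal_eq_zero]; linarith)
            ENNReal.ofReal_ne_top hTx
        have h2 : ENNReal.ofReal q * T ≤ ENNReal.ofReal q * y := mul_le_mul_right hTy _
        have h3 : T < T := by
          calc T = (ENNReal.ofReal p + ENNReal.ofReal q) * T := by
                rw [← ENNReal.ofReal_add hp hq, hpq, ENNReal.ofReal_one, one_mul]
            _ = ENNReal.ofReal p * T + ENNReal.ofReal q * T := add_mul _ _ _
            _ < ENNReal.ofReal p * x + ENNReal.ofReal q * T :=
                ENNReal.add_lt_add_right (ENNReal.mul_ne_top ENNReal.ofReal_ne_top hT) h1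
            _ ≤ ENNReal.ofReal p * x + ENNReal.ofReal q * y := add_le_add_right h2 _
            _ = T := hmixT.symm
        exact absurd h3 (lt_irrefl T)
      have hQa : (∑ v : Fin n → Bool,
          ENNReal.ofReal (stepProb (Function.update F i (gd (π h.length))) h v)
            * condRemaining F (h ++ [v]) i) = pendTail F h i := by
        refine le_antisymm ?_ (hle (π h.length))
        by_cases hT : pendTail F h i = ⊤
        · rw [hT]; exact le_top
        by_contra hgt
        push_neg at hgt
        cases hA : π h.length with
        | true =>
          rw [hA] at hgt
          refine contra _ _ _ c (1 - c) hc0 (by linarith) (by ring)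
            (by rw [hA] at hca; simpa using hca) hT hmix (hle false) hgt
        | false =>
          rw [hA] at hgt
          refine contra _ _ _ (1 - c) c (by linarith) hc0 (by ring)
            (by rw [hA] at hca; simpa using hca) hT (by rw [hmix, add_comm]) (hle true) hgt
      rw [condRemaining_eq, condRemaining_eq, hTG, hQa]
  -- final assembly
  have hG0 : 0 < histProb G ([] : Hist n) := by
    unfold histProb contProb
    simp
  have hkey := key τ [] (by simp) hG0
  rw [condLatency_eq F [] i, condLatency_eq G [] i]
  rw [condRemaining_eq, condRemaining_eq] at hkey
  have h2 : pendTail G ([] : Hist n) i = pendTail F ([] : Hist n) i :=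
    (ENNReal.add_right_inj
      (by split <;> simp : (if pending ([]:Hist n) i then (1:ℝ≥0∞) else 0) ≠ ⊤)).1 hkey
  rw [h2]

end Contention
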